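/- Let 𝔄 be an invertible 2p×2p complex matrix with p×p blocks 𝔄_{ij} (i,j ∈ {1,2}) such that ρ₊ := 𝔄_{21}𝔄_{22}* + 𝔄_{22}𝔄_{21}* is positive definite, and such that, setting ℵ := (𝔄^{−1})*J𝔄^{−1} with p×p blocks ℵ_{ij}, the block ℵ_{11} is negative definite. Then for a p×p complex matrix φ the following are equivalent: (i) there exists a nonsingular pair (R, Q) with property-J such that F := 𝔄_{21}R + 𝔄_{22}Q is invertible and φ = i(𝔄_{11}R + 𝔄_{12}Q)F^{−1}; (ii) there exists a p×p matrix u with u*u ≤ I_p such that φ = i(−ℵ_{11})^{−1}ℵ_{12} − (−ℵ_{11})^{−1/2} u ρ₊^{−1/2}. In other words, the values of the linear-fractional transformations generated by 𝔄 and property-J pairs form exactly the matrix ball with centre i(−ℵ_{11})^{−1}ℵ_{12}, left radius (−ℵ_{11})^{−1/2} and right radius ρ₊^{−1/2}. -/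

import Mathlib

open Matrix
open scoped ComplexOrder

noncomputable section

/-- `X^{-1/2}` for a positive semidefinite matrix `X` (junk value `0` otherwise). -/
def invSqrt {p : ℕ} (X : Matrix (Fin p) (Fin p) ℂ) : Matrix (Fin p) (Fin p) ℂ :=
  open scoped Classical in
  if h : X.PosSemidef then
    ((h.1.eigenvectorUnitary : Matrix (Fin p) (Fin p) ℂ) *
      diagonal ((↑) ∘ Real.sqrt ∘ h.1.eigenvalues) *
      (star h.1.eigenvectorUnitary : Matrix (Fin p) (Fin p) ℂ))⁻¹ else 0

namespace MatrixBallAux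

variable {p : ℕ}

def psdSqrt {X : Matrix (Fin p) (Fin p) ℂ} (h : X.PosSemidef) : Matrix (Fin p) (Fin p) ℂ :=
  (h.1.eigenvectorUnitary : Matrix (Fin p) (Fin p) ℂ) *
      diagonal ((↑) ∘ Real.sqrt ∘ h.1.eigenvalues) *
      (star h.1.eigenvectorUnitary : Matrix (Fin p) (Fin p) ℂ)

lemma psdSqrt_mul_self {X : Matrix (Fin p) (Fin p) ℂ} (h : X.PosSemidef) :
    psdSqrt h * psdSqrt h = X := by
  have hU := Unitary.coe_star_mul_self h.1.eigenvectorUnitary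
  have hD : diagonal ((↑) ∘ Real.sqrt ∘ h.1.eigenvalues) *
      diagonal ((↑) ∘ Real.sqrt ∘ h.1.eigenvalues) =
      diagonal (RCLike.ofReal ∘ h.1.eigenvalues : Fin p → ℂ) := by
    rw [diagonal_mul_diagonal]
    congr 1
    funext i
    simp only [Function.comp_apply]
    rw [← Complex.ofReal_mul, Real.mul_self_sqrt (h.eigenvalues_nonneg i)]
    rfl
  conv_rhs => rw [h.1.spectral_theorem, Unitary.conjStarAlgAut_apply]
  unfold psdSqrt
  calc _ = (h.1.eigenvectorUnitary : Matrix (Fin p) (Fin p) ℂ) *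
      diagonal ((↑) ∘ Real.sqrt ∘ h.1.eigenvalues) *
      ((star h.1.eigenvectorUnitary : Matrix (Fin p) (Fin p) ℂ) *
        (h.1.eigenvectorUnitary : Matrix (Fin p) (Fin p) ℂ)) *
      diagonal ((↑) ∘ Real.sqrt ∘ h.1.eigenvalues) *
      (star h.1.eigenvectorUnitary : Matrix (Fin p) (Fin p) ℂ) := by
        simp only [Matrix.mul_assoc]
    _ = _ := by rw [hU, Matrix.mul_one, Matrix.mul_assoc _ (diagonal _) (diagonal _), hD]

lemma psdSqrt_isHermitian {X : Matrix (Fin p) (Fin p) ℂ} (h : X.PosSemidef) :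
    (psdSqrt h)ᴴ = psdSqrt h := by
  unfold psdSqrt
  rw [conjTranspose_mul, conjTranspose_mul, diagonal_conjTranspose, Matrix.mul_assoc]
  have : star ((↑) ∘ Real.sqrt ∘ h.1.eigenvalues : Fin p → ℂ) =
      (↑) ∘ Real.sqrt ∘ h.1.eigenvalues := by
    funext i; simp
  rw [this, ← Matrix.star_eq_conjTranspose, ← Matrix.star_eq_conjTranspose, star_star]

/-- The `2p × p` block column matrix `[X; Y]`. -/
def col (X Y : Matrix (Fin p) (Fin p) ℂ) : Matrix (Fin p ⊕ Fin p) (Fin p) ℂ :=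
  Matrix.of (Sum.elim X Y)

@[simp] lemma col_inl (X Y : Matrix (Fin p) (Fin p) ℂ) (i j : Fin p) :
    col X Y (Sum.inl i) j = X i j := rfl

@[simp] lemma col_inr (X Y : Matrix (Fin p) (Fin p) ℂ) (i j : Fin p) :
    col X Y (Sum.inr i) j = Y i j := rfl

lemma mul_col (M : Matrix (Fin p ⊕ Fin p) (Fin p ⊕ Fin p) ℂ) (X Y : Matrix (Fin p) (Fin p) ℂ) :
    M * col X Y =
      col (M.toBlocks₁₁ * X + M.toBlocks₁₂ * Y) (M.toBlocks₂₁ * X + M.toBlocks₂₂ * Y) := by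
  ext i j
  cases i with
  | inl i =>
      simp [Matrix.mul_apply, Fintype.sum_sum_type, Matrix.toBlocks₁₁, Matrix.toBlocks₁₂,
        Matrix.add_apply]
  | inr i =>
      simp [Matrix.mul_apply, Fintype.sum_sum_type, Matrix.toBlocks₂₁, Matrix.toBlocks₂₂,
        Matrix.add_apply]

lemma conjTranspose_col_mul_col (X Y Z W : Matrix (Fin p) (Fin p) ℂ) :
    (col X Y)ᴴ * col Z W = Xᴴ * Z + Yᴴ * W := by
  ext i j
  simp [Matrix.mul_apply, Fintype.sum_sum_type, Matrix.conjTranspose_apply,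
    Matrix.add_apply]

lemma col_mul (X Y F : Matrix (Fin p) (Fin p) ℂ) :
    col X Y * F = col (X * F) (Y * F) := by
  ext i j
  cases i with
  | inl i => simp [Matrix.mul_apply]
  | inr i => simp [Matrix.mul_apply]

lemma col_inj {X Y Z W : Matrix (Fin p) (Fin p) ℂ} (h : col X Y = col Z W) :
    X = Z ∧ Y = W := by
  constructor <;> ext i j
  · exact congrFun (congrFun h (Sum.inl i)) j
  · exact congrFun (congrFun h (Sum.inr i)) j

lemma col_mulVec (X Y : Matrix (Fin p) (Fin p) ℂ) (v : Fin p → ℂ) :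
    (col X Y) *ᵥ v = Sum.elim (X *ᵥ v) (Y *ᵥ v) := by
  ext i
  cases i <;> rfl

lemma posDef_conjTranspose_mul_self {m n : Type*} [Fintype m] [Fintype n] [DecidableEq n]
    (C : Matrix m n ℂ) (h : ∀ v, C *ᵥ v = 0 → v = 0) : (Cᴴ * C).PosDef := by
  rw [Matrix.posDef_iff_dotProduct_mulVec]
  constructor
  · unfold Matrix.IsHermitian
    rw [Matrix.conjTranspose_mul, Matrix.conjTranspose_conjTranspose]
  · intro x hx
    have hCx : C *ᵥ x ≠ 0 := fun hc => hx (h x hc)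
    have : star x ⬝ᵥ (Cᴴ * C) *ᵥ x = star (C *ᵥ x) ⬝ᵥ (C *ᵥ x) := by
      rw [← Matrix.mulVec_mulVec, Matrix.dotProduct_mulVec, ← Matrix.star_mulVec]
    rw [this]
    exact Matrix.dotProduct_star_self_pos_iff.mpr hCx

section invSqrt

variable {X : Matrix (Fin p) (Fin p) ℂ}

lemma sqrt_isUnit (hX : X.PosDef) : IsUnit (psdSqrt hX.posSemidef) := by
  rw [Matrix.isUnit_iff_isUnit_det]
  have h : (psdSqrt hX.posSemidef).det * (psdSqrt hX.posSemidef).det = X.det := by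
    rw [← Matrix.det_mul, psdSqrt_mul_self hX.posSemidef]
  have hd : IsUnit X.det := (Matrix.isUnit_iff_isUnit_det _).mp hX.isUnit
  exact isUnit_of_mul_isUnit_left (h ▸ hd)

lemma invSqrt_eq (hX : X.PosDef) : invSqrt X = (psdSqrt hX.posSemidef)⁻¹ :=
  dif_pos hX.posSemidef

lemma invSqrt_mul_sqrt (hX : X.PosDef) : invSqrt X * psdSqrt hX.posSemidef = 1 := by
  rw [invSqrt_eq hX]
  exact Matrix.nonsing_inv_mul _ ((Matrix.isUnit_iff_isUnit_det _).mp (sqrt_isUnit hX))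

lemma sqrt_mul_invSqrt (hX : X.PosDef) : psdSqrt hX.posSemidef * invSqrt X = 1 := by
  rw [invSqrt_eq hX]
  exact Matrix.mul_nonsing_inv _ ((Matrix.isUnit_iff_isUnit_det _).mp (sqrt_isUnit hX))

lemma invSqrt_conjTranspose (hX : X.PosDef) : (invSqrt X)ᴴ = invSqrt X := by
  rw [invSqrt_eq hX, Matrix.conjTranspose_nonsing_inv,
    psdSqrt_isHermitian hX.posSemidef]

lemma invSqrt_mul_invSqrt (hX : X.PosDef) : invSqrt X * invSqrt X = X⁻¹ := by
  rw [invSqrt_eq hX, ← Matrix.mul_inv_rev, psdSqrt_mul_self hX.posSemidef]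

end invSqrt

end MatrixBallAux

set_option maxHeartbeats 1000000 in
open MatrixBallAux in
/-- matrix ball description of the values of the linear fractional
transformations generated by a frame `𝔄` and nonsingular pairs with property-`J`. -/
theorem matrix_ball_description
    {p : ℕ} (hp : 1 ≤ p)
    (𝔄 : Matrix (Fin p ⊕ Fin p) (Fin p ⊕ Fin p) ℂ)
    (h𝔄 : IsUnit 𝔄)
    (hρ : (𝔄.toBlocks₂₁ * (𝔄.toBlocks₂₂)ᴴ + 𝔄.toBlocks₂₂ * (𝔄.toBlocks₂₁)ᴴ).PosDef)
    (hℵ : (-((𝔄⁻¹)ᴴ * Matrix.fromBlocks 0 1 1 0 * 𝔄⁻¹).toBlocks₁₁).PosDef)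
    (φ : Matrix (Fin p) (Fin p) ℂ) :
    (∃ R Q : Matrix (Fin p) (Fin p) ℂ,
        (Rᴴ * R + Qᴴ * Q).PosDef ∧ (Rᴴ * Q + Qᴴ * R).PosSemidef ∧
        IsUnit (𝔄.toBlocks₂₁ * R + 𝔄.toBlocks₂₂ * Q) ∧
        φ = Complex.I • ((𝔄.toBlocks₁₁ * R + 𝔄.toBlocks₁₂ * Q) *
          (𝔄.toBlocks₂₁ * R + 𝔄.toBlocks₂₂ * Q)⁻¹)) ↔
    (∃ u : Matrix (Fin p) (Fin p) ℂ,
        ((1 : Matrix (Fin p) (Fin p) ℂ) - uᴴ * u).PosSemidef ∧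
        φ = Complex.I •
            ((-((𝔄⁻¹)ᴴ * Matrix.fromBlocks 0 1 1 0 * 𝔄⁻¹).toBlocks₁₁)⁻¹ *
              ((𝔄⁻¹)ᴴ * Matrix.fromBlocks 0 1 1 0 * 𝔄⁻¹).toBlocks₁₂) -
          invSqrt (-((𝔄⁻¹)ᴴ * Matrix.fromBlocks 0 1 1 0 * 𝔄⁻¹).toBlocks₁₁) * u *
            invSqrt (𝔄.toBlocks₂₁ * (𝔄.toBlocks₂₂)ᴴ + 𝔄.toBlocks₂₂ * (𝔄.toBlocks₂₁)ᴴ)) := by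
  classical
  have hdet : IsUnit 𝔄.det := (Matrix.isUnit_iff_isUnit_det _).mp h𝔄
  have hAB : 𝔄 * 𝔄⁻¹ = 1 := Matrix.mul_nonsing_inv _ hdet
  have hBA : 𝔄⁻¹ * 𝔄 = 1 := Matrix.nonsing_inv_mul _ hdet
  set J' : Matrix (Fin p ⊕ Fin p) (Fin p ⊕ Fin p) ℂ := Matrix.fromBlocks 0 1 1 0 with hJ'def
  set N : Matrix (Fin p ⊕ Fin p) (Fin p ⊕ Fin p) ℂ := (𝔄⁻¹)ᴴ * J' * 𝔄⁻¹ with hNdef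
  set ρ : Matrix (Fin p) (Fin p) ℂ :=
    𝔄.toBlocks₂₁ * (𝔄.toBlocks₂₂)ᴴ + 𝔄.toBlocks₂₂ * (𝔄.toBlocks₂₁)ᴴ with hρdef
  set A : Matrix (Fin p) (Fin p) ℂ := -N.toBlocks₁₁ with hAdef
  -- abbreviations for the square roots
  set sA : Matrix (Fin p) (Fin p) ℂ := psdSqrt hℵ.posSemidef with hsAdef
  set iA : Matrix (Fin p) (Fin p) ℂ := invSqrt A with hiAdef
  set sρ : Matrix (Fin p) (Fin p) ℂ := psdSqrt hρ.posSemidef with hsρdef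
  set iρ : Matrix (Fin p) (Fin p) ℂ := invSqrt ρ with hiρdef
  have hA2 : A⁻¹ * A = 1 :=
    Matrix.nonsing_inv_mul _ ((Matrix.isUnit_iff_isUnit_det _).mp hℵ.isUnit)
  have hsAsA : sA * sA = A := psdSqrt_mul_self hℵ.posSemidef
  have hsAH : sAᴴ = sA := psdSqrt_isHermitian hℵ.posSemidef
  have hiAH : iAᴴ = iA := invSqrt_conjTranspose hℵ
  have hsiA : sA * iA = 1 := sqrt_mul_invSqrt hℵ
  have hisA : iA * sA = 1 := invSqrt_mul_sqrt hℵ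
  have hiiA : iA * iA = A⁻¹ := invSqrt_mul_invSqrt hℵ
  have hsρsρ : sρ * sρ = ρ := psdSqrt_mul_self hρ.posSemidef
  have hsρH : sρᴴ = sρ := psdSqrt_isHermitian hρ.posSemidef
  have hiρH : iρᴴ = iρ := invSqrt_conjTranspose hρ
  have hsiρ : sρ * iρ = 1 := sqrt_mul_invSqrt hρ
  have hisρ : iρ * sρ = 1 := invSqrt_mul_sqrt hρ
  have hiiρ : iρ * iρ = ρ⁻¹ := invSqrt_mul_invSqrt hρ
  clear_value sA iA sρ iρ
  -- cancellation helpers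
  have cA1 : ∀ Z : Matrix (Fin p) (Fin p) ℂ, sA * (iA * Z) = Z := fun Z => by
    rw [← Matrix.mul_assoc, hsiA, Matrix.one_mul]
  have cA2 : ∀ Z : Matrix (Fin p) (Fin p) ℂ, iA * (sA * Z) = Z := fun Z => by
    rw [← Matrix.mul_assoc, hisA, Matrix.one_mul]
  have cA3 : ∀ Z : Matrix (Fin p) (Fin p) ℂ, sA * (sA * Z) = A * Z := fun Z => by
    rw [← Matrix.mul_assoc, hsAsA]
  have cA4 : ∀ Z : Matrix (Fin p) (Fin p) ℂ, iA * (iA * Z) = A⁻¹ * Z := fun Z => by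
    rw [← Matrix.mul_assoc, hiiA]
  -- basic facts about J' and N
  have hJH : J'ᴴ = J' := by
    rw [hJ'def, Matrix.fromBlocks_conjTranspose]
    simp
  have hJJ : J' * J' = 1 := by
    rw [hJ'def, Matrix.fromBlocks_multiply]
    simp [Matrix.fromBlocks_one]
  have hNH : Nᴴ = N := by
    rw [hNdef]
    simp only [Matrix.conjTranspose_mul, Matrix.conjTranspose_conjTranspose, hJH,
      Matrix.mul_assoc]
  have hN21 : N.toBlocks₂₁ = (N.toBlocks₁₂)ᴴ := by
    conv_lhs => rw [← hNH]
    ext i j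
    rfl
  have hN11 : N.toBlocks₁₁ = -A := by rw [hAdef, neg_neg]
  -- the Schur complement identity
  set M : Matrix (Fin p ⊕ Fin p) (Fin p ⊕ Fin p) ℂ := 𝔄 * J' * 𝔄ᴴ with hMdef
  have hNM : N * M = 1 := by
    rw [hNdef, hMdef]
    calc (𝔄⁻¹)ᴴ * J' * 𝔄⁻¹ * (𝔄 * J' * 𝔄ᴴ)
        = (𝔄⁻¹)ᴴ * (J' * ((𝔄⁻¹ * 𝔄) * (J' * 𝔄ᴴ))) := by simp only [Matrix.mul_assoc]
      _ = 1 := by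
          rw [hBA, Matrix.one_mul, ← Matrix.mul_assoc J', hJJ, Matrix.one_mul,
            ← Matrix.conjTranspose_mul, hAB, Matrix.conjTranspose_one]
  have hM22 : M.toBlocks₂₂ = ρ := by
    rw [hMdef, hρdef]
    conv_lhs => rw [← Matrix.fromBlocks_toBlocks 𝔄]
    rw [hJ'def, Matrix.fromBlocks_conjTranspose, Matrix.fromBlocks_multiply,
      Matrix.fromBlocks_multiply, Matrix.toBlocks_fromBlocks₂₂]
    simp [add_comm]
  have hblocks : Matrix.fromBlocks
      (N.toBlocks₁₁ * M.toBlocks₁₁ + N.toBlocks₁₂ * M.toBlocks₂₁)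
      (N.toBlocks₁₁ * M.toBlocks₁₂ + N.toBlocks₁₂ * M.toBlocks₂₂)
      (N.toBlocks₂₁ * M.toBlocks₁₁ + N.toBlocks₂₂ * M.toBlocks₂₁)
      (N.toBlocks₂₁ * M.toBlocks₁₂ + N.toBlocks₂₂ * M.toBlocks₂₂)
      = Matrix.fromBlocks 1 0 0 1 := by
    rw [← Matrix.fromBlocks_multiply, Matrix.fromBlocks_toBlocks, Matrix.fromBlocks_toBlocks,
      hNM, Matrix.fromBlocks_one]
  rw [Matrix.fromBlocks_inj] at hblocks
  obtain ⟨-, he12, -, he22⟩ := hblocks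
  have hM12 : M.toBlocks₁₂ = A⁻¹ * (N.toBlocks₁₂ * ρ) := by
    have h1 : A * M.toBlocks₁₂ = N.toBlocks₁₂ * ρ := by
      rw [hN11, hM22] at he12
      rwa [Matrix.neg_mul, neg_add_eq_zero] at he12
    rw [← h1, ← Matrix.mul_assoc, hA2, Matrix.one_mul]
  have hSchur : N.toBlocks₂₂ + (N.toBlocks₁₂)ᴴ * (A⁻¹ * N.toBlocks₁₂) = ρ⁻¹ := by
    have hSρ : (N.toBlocks₂₂ + (N.toBlocks₁₂)ᴴ * (A⁻¹ * N.toBlocks₁₂)) * ρ = 1 := by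
      rw [hN21, hM22, hM12] at he22
      rw [← he22]
      simp only [Matrix.add_mul, Matrix.mul_assoc]
      abel
    exact (Matrix.inv_eq_left_inv hSρ).symm
  clear_value J' N M ρ A
  -- the quadratic-form identity (completing the square)
  have hquad : ∀ ψ : Matrix (Fin p) (Fin p) ℂ,
      (col ψ 1)ᴴ * (N * col ψ 1)
        = ρ⁻¹ - (sA * ψ - iA * N.toBlocks₁₂)ᴴ * (sA * ψ - iA * N.toBlocks₁₂) := by
    intro ψ
    rw [mul_col, conjTranspose_col_mul_col, Matrix.mul_one, Matrix.mul_one,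
      Matrix.conjTranspose_one, Matrix.one_mul, hN11, hN21, ← hSchur]
    rw [Matrix.conjTranspose_sub, Matrix.conjTranspose_mul, Matrix.conjTranspose_mul,
      hsAH, hiAH]
    rw [Matrix.sub_mul, Matrix.mul_sub, Matrix.mul_sub]
    simp only [Matrix.mul_assoc, cA1, cA2, cA3, cA4, Matrix.neg_mul, Matrix.mul_neg,
      Matrix.mul_add, Matrix.add_mul]
    abel
  -- expressing `RᴴQ + QᴴR` via the `J'`-form
  have hJcol : ∀ R Q : Matrix (Fin p) (Fin p) ℂ,
      Rᴴ * Q + Qᴴ * R = (col R Q)ᴴ * (J' * col R Q) := by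
    intro R Q
    rw [mul_col, conjTranspose_col_mul_col, hJ'def]
    simp
  constructor
  · rintro ⟨R, Q, hRQpos, hRQJ, hF, hφeq⟩
    set P := 𝔄.toBlocks₁₁ * R + 𝔄.toBlocks₁₂ * Q with hPdef
    set F := 𝔄.toBlocks₂₁ * R + 𝔄.toBlocks₂₂ * Q with hFdef
    clear_value P F
    have hFdet : IsUnit F.det := (Matrix.isUnit_iff_isUnit_det _).mp hF
    have hF1 : F * F⁻¹ = 1 := Matrix.mul_nonsing_inv _ hFdet
    have hF2 : F⁻¹ * F = 1 := Matrix.nonsing_inv_mul _ hFdet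
    set ψ := P * F⁻¹ with hψdef
    clear_value ψ
    have hcol1 : 𝔄 * col R Q = col P F := by
      rw [mul_col, ← hPdef, ← hFdef]
    have hcolRQ : col R Q = 𝔄⁻¹ * col P F := by
      rw [← hcol1, ← Matrix.mul_assoc, hBA, Matrix.one_mul]
    have hPsiF : col P F = col ψ 1 * F := by
      rw [col_mul, hψdef, Matrix.mul_assoc, hF2, Matrix.mul_one, Matrix.one_mul]
    have h0 : Rᴴ * Q + Qᴴ * R = Fᴴ * ((col ψ 1)ᴴ * (N * col ψ 1)) * F := by
      rw [hJcol R Q, hcolRQ, hPsiF, hNdef]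
      simp only [Matrix.conjTranspose_mul, Matrix.mul_assoc]
    rw [h0] at hRQJ
    have hΩpsd : ((col ψ 1)ᴴ * (N * col ψ 1)).PosSemidef := by
      have h2 := hRQJ.conjTranspose_mul_mul_same F⁻¹
      have hFH : (F⁻¹)ᴴ * Fᴴ = 1 := by
        rw [← Matrix.conjTranspose_mul, hF1, Matrix.conjTranspose_one]
      have h3 : (F⁻¹)ᴴ * (Fᴴ * ((col ψ 1)ᴴ * (N * col ψ 1)) * F) * F⁻¹
          = (col ψ 1)ᴴ * (N * col ψ 1) := by
        calc (F⁻¹)ᴴ * (Fᴴ * ((col ψ 1)ᴴ * (N * col ψ 1)) * F) * F⁻¹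
            = ((F⁻¹)ᴴ * Fᴴ) * ((col ψ 1)ᴴ * (N * col ψ 1)) * (F * F⁻¹) := by
              simp only [Matrix.mul_assoc]
          _ = (col ψ 1)ᴴ * (N * col ψ 1) := by
              rw [hFH, hF1, Matrix.one_mul, Matrix.mul_one]
      rwa [h3] at h2
    rw [hquad ψ] at hΩpsd
    set w := sA * ψ - iA * N.toBlocks₁₂ with hwdef
    clear_value w
    refine ⟨(-Complex.I) • (w * sρ), ?_, ?_⟩
    · have h4 := hΩpsd.conjTranspose_mul_mul_same sρ
      have h5 : sρᴴ * (ρ⁻¹ - wᴴ * w) * sρ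
          = 1 - ((-Complex.I) • (w * sρ))ᴴ * ((-Complex.I) • (w * sρ)) := by
        rw [hsρH, Matrix.conjTranspose_smul, Matrix.conjTranspose_mul, hsρH]
        rw [Matrix.mul_sub, Matrix.sub_mul]
        congr 1
        · rw [← hiiρ, ← Matrix.mul_assoc, hsiρ, Matrix.one_mul, hisρ]
        · rw [Matrix.smul_mul, Matrix.mul_smul, smul_smul]
          simp only [star_neg, Complex.star_def, Complex.conj_I, neg_neg, Complex.I_mul_I,
            neg_mul, mul_neg, neg_neg]
          rw [one_smul]
          simp only [Matrix.mul_assoc]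
      rwa [h5] at h4
    · rw [hφeq]
      have h6 : iA * ((-Complex.I) • (w * sρ)) * iρ
          = (-Complex.I) • (ψ - A⁻¹ * N.toBlocks₁₂) := by
        rw [Matrix.mul_smul, Matrix.smul_mul]
        congr 1
        rw [Matrix.mul_assoc, Matrix.mul_assoc, hsiρ, Matrix.mul_one, hwdef,
          Matrix.mul_sub, cA2, cA4]
      rw [h6]
      module
  · rintro ⟨u, hu1, hu2⟩
    set ψ := A⁻¹ * N.toBlocks₁₂ + Complex.I • (iA * (u * iρ)) with hψdef
    set R := (𝔄⁻¹).toBlocks₁₁ * ψ + (𝔄⁻¹).toBlocks₁₂ with hRdef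
    set Q := (𝔄⁻¹).toBlocks₂₁ * ψ + (𝔄⁻¹).toBlocks₂₂ with hQdef
    clear_value ψ R Q
    have hcolRQ : col R Q = 𝔄⁻¹ * col ψ 1 := by
      rw [mul_col, Matrix.mul_one, Matrix.mul_one, hRdef, hQdef]
    have hAcol : 𝔄 * col R Q = col ψ 1 := by
      rw [hcolRQ, ← Matrix.mul_assoc, hAB, Matrix.one_mul]
    rw [mul_col] at hAcol
    obtain ⟨hP1, hF1'⟩ := col_inj hAcol
    have hw : sA * ψ - iA * N.toBlocks₁₂ = Complex.I • (u * iρ) := by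
      have h6 : sA * A⁻¹ = iA := by rw [← hiiA, ← Matrix.mul_assoc, hsiA, Matrix.one_mul]
      rw [hψdef, Matrix.mul_add, ← Matrix.mul_assoc, h6, Matrix.mul_smul, cA1]
      abel
    have hΩ : Rᴴ * Q + Qᴴ * R
        = ρ⁻¹ - (sA * ψ - iA * N.toBlocks₁₂)ᴴ * (sA * ψ - iA * N.toBlocks₁₂) := by
      rw [hJcol R Q, hcolRQ, ← hquad ψ, hNdef]
      simp only [Matrix.conjTranspose_mul, Matrix.mul_assoc]
    refine ⟨R, Q, ?_, ?_, ?_, ?_⟩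
    · have hCT : Rᴴ * R + Qᴴ * Q = (col R Q)ᴴ * col R Q :=
        (conjTranspose_col_mul_col R Q R Q).symm
      rw [hCT, hcolRQ]
      apply posDef_conjTranspose_mul_self
      intro v hv
      have h7 : col ψ 1 *ᵥ v = 0 := by
        have h8 : 𝔄 *ᵥ ((𝔄⁻¹ * col ψ 1) *ᵥ v) = 0 := by rw [hv, Matrix.mulVec_zero]
        rwa [Matrix.mulVec_mulVec, ← Matrix.mul_assoc, hAB, Matrix.one_mul] at h8
      rw [MatrixBallAux.col_mulVec] at h7
      ext i
      have h9 := congrFun h7 (Sum.inr i)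
      simpa using h9
    · rw [hΩ, hw]
      have h10 : ρ⁻¹ - (Complex.I • (u * iρ))ᴴ * (Complex.I • (u * iρ))
          = iρᴴ * (1 - uᴴ * u) * iρ := by
        rw [hiρH, Matrix.conjTranspose_smul, Matrix.conjTranspose_mul, hiρH]
        rw [Matrix.mul_sub, Matrix.sub_mul]
        congr 1
        · rw [Matrix.mul_one, hiiρ]
        · rw [Matrix.smul_mul, Matrix.mul_smul, smul_smul]
          simp only [Complex.star_def, Complex.conj_I, neg_mul, Complex.I_mul_I, neg_neg]
          rw [one_smul]
          simp only [Matrix.mul_assoc]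
      rw [h10]
      exact hu1.conjTranspose_mul_mul_same iρ
    · rw [hF1']
      exact isUnit_one
    · rw [hP1, hF1', inv_one, Matrix.mul_one, hu2, hψdef]
      rw [smul_add, smul_smul, Complex.I_mul_I, neg_one_smul, ← Matrix.mul_assoc]
      abel

end
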